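/- Second error event bound in the proof of Theorem 3: for every ε > 0 there exists N such that for all n ≥ N, with 𝔅 = B^n_{(S,Y),ε}(𝐁) and M = |𝔅|, ∑_{𝐛⃗ ∈ 𝔅} (1/M) ∑_{s⃗ ∈ 𝒮ⁿ} 2^{−n} ∑_{y⃗ ∈ 𝒴ⁿ} p(y⃗ | 𝐛⃗, s⃗) ∑_{𝐛̃⃗ ∈ 𝔅, 𝐛̃⃗ ≠ 𝐛⃗} ∑_{s̃⃗ ∈ 𝒮ⁿ} 2^{−n}·1[(s̃⃗,y⃗) ∈ A^n_ε(SY) and (b̃⃗_j, y⃗) ∈ A^n_ε(B_jY) for all j = 1,…,m] ≤ 2^{n(H(𝐁) − H(𝐁,S) + ∑_{j=1}^m H(B_j|Y) + H(S|Y) + (12+2m)ε)}, where p(y⃗|𝐛⃗,s⃗) = ∏_{i=1}^n p(y_i | (s_i, f(𝐛_i))), b̃⃗_j denotes the j-th component bit-sequence of 𝐛̃⃗, and 1[·] is the indicator function. -/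

import Mathlib

open Real
open scoped BigOperators Classical

noncomputable section

/-- The sign alphabet `𝒮 = {-1, +1}`. -/
inductive Sign : Type
  | neg  -- the sign `-1`
  | pos  -- the sign `+1`
  deriving DecidableEq

instance : Fintype Sign :=
  ⟨⟨[Sign.neg, Sign.pos], by simp⟩, fun x => by cases x <;> simp⟩

/-- Probability of a length-`n` sequence under the i.i.d. product of the pmf `p`. -/
def seqProb {α : Type*} (p : α → ℝ) {n : ℕ} (u : Fin n → α) : ℝ :=
  ∏ i, p (u i)

/-- Entropy in bits of a pmf on a finite alphabet. -/
def ent {α : Type*} [Fintype α] (p : α → ℝ) : ℝ :=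
  -∑ a, p a * logb 2 (p a)

section Pair

variable {U V : Type*} [Fintype U] [Fintype V]

/-- `U`-marginal of a joint pmf on `U × V`. -/
def margU (p : U × V → ℝ) : U → ℝ := fun u => ∑ v, p (u, v)

/-- `V`-marginal of a joint pmf on `U × V`. -/
def margV (p : U × V → ℝ) : V → ℝ := fun v => ∑ u, p (u, v)

/-- Conditional pmf of `V` given `U`. -/
def condVU (p : U × V → ℝ) (u : U) (v : V) : ℝ := p (u, v) / margU p u

/-- The weakly typical set `A^n_ε(U)` with respect to a pmf `p`. -/
def typicalSet {α : Type*} [Fintype α] (p : α → ℝ) (n : ℕ) (ε : ℝ) :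
    Set (Fin n → α) :=
  {u | 0 < seqProb p u ∧ |(-(1 / (n : ℝ)) * logb 2 (seqProb p u)) - ent p| ≤ ε}

/-- The jointly typical set `A^n_ε(UV)` with respect to a joint pmf `p`. -/
def jointTypicalSet (p : U × V → ℝ) (n : ℕ) (ε : ℝ) :
    Set ((Fin n → U) × (Fin n → V)) :=
  {uv | 0 < seqProb (margU p) uv.1 ∧ 0 < seqProb (margV p) uv.2 ∧
    0 < seqProb p (fun i => (uv.1 i, uv.2 i)) ∧
    |(-(1 / (n : ℝ)) * logb 2 (seqProb (margU p) uv.1)) - ent (margU p)| ≤ ε ∧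
    |(-(1 / (n : ℝ)) * logb 2 (seqProb (margV p) uv.2)) - ent (margV p)| ≤ ε ∧
    |(-(1 / (n : ℝ)) * logb 2 (seqProb p (fun i => (uv.1 i, uv.2 i)))) - ent p| ≤ ε}

/-- The B-typical set `B^n_{V,ε}(U)`. -/
def BtypicalSet (p : U × V → ℝ) (n : ℕ) (ε : ℝ) : Set (Fin n → U) :=
  {u | u ∈ typicalSet (margU p) n ε ∧
    1 - ε ≤ ∑ v : Fin n → V,
      if (u, v) ∈ jointTypicalSet p n ε then ∏ i, condVU p (u i) (v i) else 0}

end Pair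

variable {A Y : Type*} [Fintype A] [Fintype Y] {m : ℕ}

/-- Output pmf `p(y) = ∑_{s,𝐛} (1/2)·p(𝐛)·p(y|(s,f(𝐛)))`. -/
def outPMF (W : Sign × A → Y → ℝ) (f : (Fin m → Bool) → A)
    (pb : (Fin m → Bool) → ℝ) : Y → ℝ :=
  fun y => ∑ s : Sign, ∑ b : Fin m → Bool, (1 / 2 : ℝ) * pb b * W (s, f b) y

/-- Joint pmf of `(S,Y)`. -/
def signOutPMF (W : Sign × A → Y → ℝ) (f : (Fin m → Bool) → A)
    (pb : (Fin m → Bool) → ℝ) : Sign × Y → ℝ :=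
  fun z => ∑ b : Fin m → Bool, (1 / 2 : ℝ) * pb b * W (z.1, f b) z.2

/-- Joint pmf of `(B_j, Y)`. -/
def bitOutPMF (W : Sign × A → Y → ℝ) (f : (Fin m → Bool) → A)
    (pb : (Fin m → Bool) → ℝ) (j : Fin m) : Bool × Y → ℝ :=
  fun z => ∑ s : Sign, ∑ b : Fin m → Bool,
    if b j = z.1 then (1 / 2 : ℝ) * pb b * W (s, f b) z.2 else 0

/-- Joint pmf of `(𝐁, S)` (= `(1/2)·p(𝐛)`, by independence and uniformity of `S`). -/
def bitsSignPMF (pb : (Fin m → Bool) → ℝ) : (Fin m → Bool) × Sign → ℝ :=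
  fun z => pb z.1 / 2

/-- The BMD rate `R_BMD = H(S,B₁,…,B_m) - H(S|Y) - ∑_j H(B_j|Y)`, where the conditional
entropies are `H(S|Y) = H(S,Y) - H(Y)` and `H(B_j|Y) = H(B_j,Y) - H(Y)`. -/
def RBMD (W : Sign × A → Y → ℝ) (f : (Fin m → Bool) → A)
    (pb : (Fin m → Bool) → ℝ) : ℝ :=
  ent (bitsSignPMF pb) - (ent (signOutPMF W f pb) - ent (outPMF W f pb)) -
    ∑ j : Fin m, (ent (bitOutPMF W f pb j) - ent (outPMF W f pb))

/-- The bit-metric typicality decoding condition for a message `mh`: the sign sequence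
is jointly typical with the output and every bit-level sequence is jointly typical with
the output. -/
def bmdCond (W : Sign × A → Y → ℝ) (f : (Fin m → Bool) → A)
    (pb : (Fin m → Bool) → ℝ) {n : ℕ} (ε : ℝ) {M : Type*}
    (b : M → Fin n → Fin m → Bool) (s : M → Fin n → Sign)
    (mh : M) (y : Fin n → Y) : Prop :=
  (s mh, y) ∈ jointTypicalSet (signOutPMF W f pb) n ε ∧
  ∀ j : Fin m, ((fun i => b mh i j), y) ∈ jointTypicalSet (bitOutPMF W f pb j) n ε

/-- Joint pmf of the pair `(𝐁, (S,Y))`, pairing the composite bits `𝐁` with the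
composite `(S,Y)`: `p(𝐛,(s,y)) = p(𝐛)·(1/2)·p(y|(s,f(𝐛)))`. -/
def pairBSY (W : Sign × A → Y → ℝ) (f : (Fin m → Bool) → A)
    (pb : (Fin m → Bool) → ℝ) : (Fin m → Bool) × (Sign × Y) → ℝ :=
  fun z => pb z.1 * (1 / 2 : ℝ) * W (z.2.1, f z.1) z.2.2

lemma sum_seqProb_pair {U V : Type*} [Fintype U] [Fintype V]
    (p : U × V → ℝ) {n : ℕ} (y : Fin n → V) :
    ∑ u : Fin n → U, seqProb p (fun i => (u i, y i)) = seqProb (margV p) y := by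
  unfold seqProb margV
  rw [← Fintype.piFinset_univ,
    ← Finset.prod_univ_sum (fun _ : Fin n => (Finset.univ : Finset U))
      (fun i a => p (a, y i))]

lemma count_typical {U V : Type*} [Fintype U] [Fintype V]
    (p : U × V → ℝ) (hp : ∀ z, 0 ≤ p z) (n : ℕ) (ε : ℝ)
    (y : Fin n → V) :
    ((Finset.univ.filter
      (fun u : Fin n → U => (u, y) ∈ jointTypicalSet p n ε)).card : ℝ) ≤
    (2:ℝ) ^ ((n:ℝ) * (ent p - ent (margV p) + 2*ε)) := by
  rcases (Finset.univ.filter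
      (fun u : Fin n → U => (u, y) ∈ jointTypicalSet p n ε)).eq_empty_or_nonempty with h | ⟨u0, hu0⟩
  · rw [h]; simp; positivity
  · rcases Nat.eq_zero_or_pos n with hn | hn
    · subst hn
      simp only [Nat.cast_zero, zero_mul, Real.rpow_zero]
      calc ((Finset.univ.filter _).card : ℝ) ≤ (Finset.univ.card : ℝ) := by
            exact_mod_cast Finset.card_filter_le _ _
        _ = 1 := by simp
    have hnR : (0:ℝ) < n := by exact_mod_cast hn
    simp only [Finset.mem_filter] at hu0
    obtain ⟨-, h1, h2, h3, h4, h5, h6⟩ := hu0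
    have hyb : seqProb (margV p) y ≤ (2:ℝ) ^ ((n:ℝ) * (ε - ent (margV p))) := by
      have hab := (abs_le.mp h5).1
      have hL : logb 2 (seqProb (margV p) y) ≤ (n:ℝ) * (ε - ent (margV p)) := by
        have h2' := mul_le_mul_of_nonneg_left hab (le_of_lt hnR)
        have he : (n:ℝ) * (-(1 / (n:ℝ)) * logb 2 (seqProb (margV p) y) - ent (margV p))
            = -logb 2 (seqProb (margV p) y) - (n:ℝ) * ent (margV p) := by
          field_simp
        rw [he] at h2'
        nlinarith [h2']
      calc seqProb (margV p) y = (2:ℝ) ^ (logb 2 (seqProb (margV p) y)) :=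
            (Real.rpow_logb two_pos (by norm_num) h2).symm
        _ ≤ _ := Real.rpow_le_rpow_of_exponent_le one_le_two hL
    have hub : ∀ u ∈ Finset.univ.filter
        (fun u : Fin n → U => (u, y) ∈ jointTypicalSet p n ε),
        (2:ℝ) ^ ((n:ℝ) * (-ent p - ε)) ≤ seqProb p (fun i => (u i, y i)) := by
      intro u hu
      simp only [Finset.mem_filter] at hu
      obtain ⟨-, -, -, g3, -, -, g6⟩ := hu
      have hab := (abs_le.mp g6).2
      have hL : (n:ℝ) * (-ent p - ε) ≤ logb 2 (seqProb p (fun i => (u i, y i))) := by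
        have h2' := mul_le_mul_of_nonneg_left hab (le_of_lt hnR)
        have he : (n:ℝ) * (-(1 / (n:ℝ)) * logb 2 (seqProb p fun i => (u i, y i)) - ent p)
            = -logb 2 (seqProb p fun i => (u i, y i)) - (n:ℝ) * ent p := by
          field_simp
        rw [he] at h2'
        nlinarith [h2']
      calc (2:ℝ) ^ ((n:ℝ) * (-ent p - ε))
          ≤ (2:ℝ) ^ (logb 2 (seqProb p (fun i => (u i, y i)))) :=
            Real.rpow_le_rpow_of_exponent_le one_le_two hL
        _ = _ := Real.rpow_logb two_pos (by norm_num) g3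
    set F := Finset.univ.filter
        (fun u : Fin n → U => (u, y) ∈ jointTypicalSet p n ε) with hF
    have key : (F.card : ℝ) * (2:ℝ) ^ ((n:ℝ) * (-ent p - ε))
        ≤ (2:ℝ) ^ ((n:ℝ) * (ε - ent (margV p))) := by
      calc (F.card : ℝ) * (2:ℝ) ^ ((n:ℝ) * (-ent p - ε))
          = ∑ u ∈ F, (2:ℝ) ^ ((n:ℝ) * (-ent p - ε)) := by
            rw [Finset.sum_const, nsmul_eq_mul]
        _ ≤ ∑ u ∈ F, seqProb p (fun i => (u i, y i)) := Finset.sum_le_sum hub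
        _ ≤ ∑ u : Fin n → U, seqProb p (fun i => (u i, y i)) := by
            apply Finset.sum_le_sum_of_subset_of_nonneg (Finset.subset_univ F)
            intro u _ _
            exact Finset.prod_nonneg fun i _ => hp _
        _ = seqProb (margV p) y := sum_seqProb_pair p y
        _ ≤ _ := hyb
    have hpos : (0:ℝ) < (2:ℝ) ^ ((n:ℝ) * (-ent p - ε)) := Real.rpow_pos_of_pos two_pos _
    rw [← le_div_iff₀ hpos] at key
    calc (F.card : ℝ) ≤ _ := key
      _ = (2:ℝ) ^ ((n:ℝ) * (ent p - ent (margV p) + 2*ε)) := by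
          rw [← Real.rpow_sub two_pos]; ring_nf

lemma count_allbits {n m : ℕ} (c : Fin m → (Fin n → Bool) → Prop) :
    ((Finset.univ.filter
      (fun b : Fin n → Fin m → Bool => ∀ j, c j (fun i => b i j))).card : ℝ)
      ≤ ∏ j, ((Finset.univ.filter (fun u : Fin n → Bool => c j u)).card : ℝ) := by
  classical
  have hmaps : ∀ b ∈ Finset.univ.filter
      (fun b : Fin n → Fin m → Bool => ∀ j, c j (fun i => b i j)),
      (fun (j : Fin m) => (fun i => b i j)) ∈
        Fintype.piFinset (fun j => Finset.univ.filter (fun u : Fin n → Bool => c j u)) := by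
    intro b hb
    rw [Finset.mem_filter] at hb
    exact Fintype.mem_piFinset.mpr fun j =>
      Finset.mem_filter.mpr ⟨Finset.mem_univ _, hb.2 j⟩
  have h := Finset.card_le_card_of_injOn
    (fun (b : Fin n → Fin m → Bool) (j : Fin m) => (fun i => b i j))
    hmaps
    (fun b1 _ b2 _ h => funext fun i => funext fun j => congrFun (congrFun h j) i)
  rw [Fintype.card_piFinset] at h
  calc ((Finset.univ.filter
      (fun b : Fin n → Fin m → Bool => ∀ j, c j (fun i => b i j))).card : ℝ)
      ≤ ((∏ j : Fin m, (Finset.univ.filter (fun u : Fin n → Bool => c j u)).card : ℕ) : ℝ) := by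
        exact_mod_cast h
    _ = _ := by push_cast; rfl

lemma prod_rpow2 {ι : Type*} (s : Finset ι) (g : ι → ℝ) :
    ∏ j ∈ s, (2:ℝ) ^ (g j) = (2:ℝ) ^ (∑ j ∈ s, g j) := by
  rw [Real.rpow_def_of_pos two_pos, Finset.mul_sum, Real.exp_sum]
  exact Finset.prod_congr rfl fun j _ => (Real.rpow_def_of_pos two_pos _)

section Aux2
variable {A Y : Type*} [Fintype A] [Fintype Y] {m : ℕ}

lemma margV_signOutPMF (W : Sign × A → Y → ℝ) (f : (Fin m → Bool) → A)
    (pb : (Fin m → Bool) → ℝ) :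
    margV (signOutPMF W f pb) = outPMF W f pb := rfl

lemma margV_bitOutPMF (W : Sign × A → Y → ℝ) (f : (Fin m → Bool) → A)
    (pb : (Fin m → Bool) → ℝ) (j : Fin m) :
    margV (bitOutPMF W f pb j) = outPMF W f pb := by
  funext y
  unfold margV bitOutPMF outPMF
  rw [Finset.sum_comm]
  refine Finset.sum_congr rfl fun s _ => ?_
  rw [Finset.sum_comm]
  refine Finset.sum_congr rfl fun b _ => ?_
  simp

lemma signOutPMF_nonneg (W : Sign × A → Y → ℝ) (hW0 : ∀ x y, 0 ≤ W x y)
    (f : (Fin m → Bool) → A) (pb : (Fin m → Bool) → ℝ) (hpb0 : ∀ b, 0 ≤ pb b) :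
    ∀ z, 0 ≤ signOutPMF W f pb z := by
  intro z
  exact Finset.sum_nonneg fun b _ =>
    mul_nonneg (mul_nonneg (by norm_num) (hpb0 b)) (hW0 _ _)

lemma bitOutPMF_nonneg (W : Sign × A → Y → ℝ) (hW0 : ∀ x y, 0 ≤ W x y)
    (f : (Fin m → Bool) → A) (pb : (Fin m → Bool) → ℝ) (hpb0 : ∀ b, 0 ≤ pb b)
    (j : Fin m) : ∀ z, 0 ≤ bitOutPMF W f pb j z := by
  intro z
  refine Finset.sum_nonneg fun s _ => Finset.sum_nonneg fun b _ => ?_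
  split
  · exact mul_nonneg (mul_nonneg (by norm_num) (hpb0 b)) (hW0 _ _)
  · exact le_refl 0

lemma ent_bitsSignPMF (pb : (Fin m → Bool) → ℝ) (hpb1 : ∑ b, pb b = 1) :
    ent (bitsSignPMF pb) = ent pb + 1 := by
  unfold ent bitsSignPMF
  rw [Fintype.sum_prod_type]
  have hcard : (Finset.univ : Finset Sign).card = 2 := rfl
  have hstep : ∀ b : Fin m → Bool,
      (∑ _s : Sign, (pb b / 2) * logb 2 (pb b / 2))
        = pb b * logb 2 (pb b) - pb b := by
    intro b
    rw [Finset.sum_const, hcard, nsmul_eq_mul]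
    by_cases h : pb b = 0
    · simp [h]
    · rw [Real.logb_div h (by norm_num), Real.logb_self_eq_one (by norm_num)]
      ring
  rw [Finset.sum_congr rfl fun b _ => hstep b, Finset.sum_sub_distrib, hpb1]
  ring

end Aux2

set_option maxHeartbeats 1000000 in
/-- **Second error event bound in the proof of Theorem 3**: for every `ε > 0` there is
`N` such that for all `n ≥ N`, with `𝔅 = B^n_{(S,Y),ε}(𝐁)` and `M = |𝔅|`, the average
(over a uniformly random sign codebook) probability that some other codeword passes the
bit-metric typicality test is at most
`2^{n(H(𝐁) - H(𝐁,S) + ∑_j H(B_j|Y) + H(S|Y) + (12+2m)ε)}`. -/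
theorem second_error_event_bound_BMD
    (W : Sign × A → Y → ℝ) (hW0 : ∀ x y, 0 ≤ W x y) (hW1 : ∀ x, ∑ y, W x y = 1)
    (f : (Fin m → Bool) → A) (hf : Function.Bijective f)
    (pb : (Fin m → Bool) → ℝ) (hpb0 : ∀ b, 0 ≤ pb b) (hpb1 : ∑ b, pb b = 1)
    (ε : ℝ) (hε : 0 < ε) :
    ∃ N : ℕ, ∀ n : ℕ, N ≤ n →
      (∑ b : Fin n → Fin m → Bool,
        (if b ∈ BtypicalSet (pairBSY W f pb) n ε then
          (1 / ((BtypicalSet (pairBSY W f pb) n ε).ncard : ℝ)) else 0) *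
        ∑ s : Fin n → Sign, (2 : ℝ) ^ (-(n : ℝ)) *
          ∑ y : Fin n → Y, (∏ i, W (s i, f (b i)) (y i)) *
            ∑ b' : Fin n → Fin m → Bool,
              (if b' ∈ BtypicalSet (pairBSY W f pb) n ε ∧ b' ≠ b then 1 else 0) *
              ∑ s' : Fin n → Sign, (2 : ℝ) ^ (-(n : ℝ)) *
                (if ((s', y) ∈ jointTypicalSet (signOutPMF W f pb) n ε ∧
                    ∀ j : Fin m,
                      ((fun i => b' i j), y) ∈ jointTypicalSet (bitOutPMF W f pb j) n ε)
                  then 1 else 0)) ≤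
      (2 : ℝ) ^ ((n : ℝ) *
        (ent pb - ent (bitsSignPMF pb) +
          (∑ j : Fin m, (ent (bitOutPMF W f pb j) - ent (outPMF W f pb))) +
          (ent (signOutPMF W f pb) - ent (outPMF W f pb)) +
          (12 + 2 * (m : ℝ)) * ε)) := by
  classical
  refine ⟨0, fun n _ => ?_⟩
  set E : ℝ := (∑ j : Fin m, (ent (bitOutPMF W f pb j) - ent (outPMF W f pb))) +
      (ent (signOutPMF W f pb) - ent (outPMF W f pb)) - 1 + (2 + 2*(m:ℝ)) * ε with hEdef
  set K : ℝ := (2:ℝ) ^ ((n:ℝ) * E) with hKdef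
  have hK0 : (0:ℝ) ≤ K := (Real.rpow_pos_of_pos two_pos _).le
  -- channel rows are pmfs
  have hWn : ∀ (b : Fin n → Fin m → Bool) (s : Fin n → Sign),
      ∑ y : Fin n → Y, (∏ i, W (s i, f (b i)) (y i)) = 1 := by
    intro b s
    rw [← Fintype.piFinset_univ, ← Finset.prod_univ_sum
      (fun _ : Fin n => (Finset.univ : Finset Y)) (fun i yi => W (s i, f (b i)) yi)]
    simp [hW1]
  -- inner double sum bound
  have hInner : ∀ (b : Fin n → Fin m → Bool) (y : Fin n → Y),
      (∑ b' : Fin n → Fin m → Bool,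
        (if b' ∈ BtypicalSet (pairBSY W f pb) n ε ∧ b' ≠ b then (1:ℝ) else 0) *
        ∑ s' : Fin n → Sign, (2 : ℝ) ^ (-(n : ℝ)) *
          (if ((s', y) ∈ jointTypicalSet (signOutPMF W f pb) n ε ∧
              ∀ j : Fin m,
                ((fun i => b' i j), y) ∈ jointTypicalSet (bitOutPMF W f pb j) n ε)
            then 1 else 0)) ≤ K := by
    intro b y
    set CsR : ℝ := ((Finset.univ.filter
      (fun s' : Fin n → Sign =>
        (s', y) ∈ jointTypicalSet (signOutPMF W f pb) n ε)).card : ℝ) with hCsRdef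
    have hCsR0 : (0:ℝ) ≤ CsR := Nat.cast_nonneg _
    have hCs : CsR ≤ (2:ℝ) ^ ((n:ℝ) * (ent (signOutPMF W f pb) - ent (outPMF W f pb) + 2*ε)) := by
      have h := count_typical (signOutPMF W f pb)
        (signOutPMF_nonneg W hW0 f pb hpb0) n ε y
      rwa [margV_signOutPMF] at h
    have hA1 : ∀ b' : Fin n → Fin m → Bool,
        (∑ s' : Fin n → Sign, (2 : ℝ) ^ (-(n : ℝ)) *
          (if ((s', y) ∈ jointTypicalSet (signOutPMF W f pb) n ε ∧
              ∀ j : Fin m,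
                ((fun i => b' i j), y) ∈ jointTypicalSet (bitOutPMF W f pb j) n ε)
            then 1 else 0))
        = (if (∀ j : Fin m,
              ((fun i => b' i j), y) ∈ jointTypicalSet (bitOutPMF W f pb j) n ε)
            then 1 else 0) * ((2:ℝ) ^ (-(n:ℝ)) * CsR) := by
      intro b'
      by_cases h : ∀ j : Fin m,
          ((fun i => b' i j), y) ∈ jointTypicalSet (bitOutPMF W f pb j) n ε
      · simp only [and_iff_left h, if_pos h, one_mul]
        rw [← Finset.mul_sum, Finset.sum_boole]
      · simp [h]
    have hCb : ((Finset.univ.filter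
        (fun b' : Fin n → Fin m → Bool => ∀ j : Fin m,
          ((fun i => b' i j), y) ∈ jointTypicalSet (bitOutPMF W f pb j) n ε)).card : ℝ)
        ≤ (2:ℝ) ^ ((n:ℝ) * ((∑ j : Fin m,
            (ent (bitOutPMF W f pb j) - ent (outPMF W f pb))) + 2*(m:ℝ)*ε)) := by
      calc ((Finset.univ.filter
          (fun b' : Fin n → Fin m → Bool => ∀ j : Fin m,
            ((fun i => b' i j), y) ∈ jointTypicalSet (bitOutPMF W f pb j) n ε)).card : ℝ)
          ≤ ∏ j : Fin m, ((Finset.univ.filter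
              (fun u : Fin n → Bool =>
                (u, y) ∈ jointTypicalSet (bitOutPMF W f pb j) n ε)).card : ℝ) :=
            count_allbits (fun j u => (u, y) ∈ jointTypicalSet (bitOutPMF W f pb j) n ε)
        _ ≤ ∏ j : Fin m, (2:ℝ) ^ ((n:ℝ) *
              (ent (bitOutPMF W f pb j) - ent (outPMF W f pb) + 2*ε)) := by
            refine Finset.prod_le_prod (fun j _ => Nat.cast_nonneg _) (fun j _ => ?_)
            have h := count_typical (bitOutPMF W f pb j)
              (bitOutPMF_nonneg W hW0 f pb hpb0 j) n ε y
            rwa [margV_bitOutPMF] at h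
        _ = _ := by
            rw [prod_rpow2]
            congr 1
            rw [← Finset.mul_sum, Finset.sum_add_distrib, Finset.sum_const,
              Finset.card_univ, Fintype.card_fin, nsmul_eq_mul]
            ring
    calc (∑ b' : Fin n → Fin m → Bool,
        (if b' ∈ BtypicalSet (pairBSY W f pb) n ε ∧ b' ≠ b then (1:ℝ) else 0) *
        ∑ s' : Fin n → Sign, (2 : ℝ) ^ (-(n : ℝ)) *
          (if ((s', y) ∈ jointTypicalSet (signOutPMF W f pb) n ε ∧
              ∀ j : Fin m,
                ((fun i => b' i j), y) ∈ jointTypicalSet (bitOutPMF W f pb j) n ε)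
            then 1 else 0))
        = ∑ b' : Fin n → Fin m → Bool,
          (if b' ∈ BtypicalSet (pairBSY W f pb) n ε ∧ b' ≠ b then (1:ℝ) else 0) *
          ((if (∀ j : Fin m,
              ((fun i => b' i j), y) ∈ jointTypicalSet (bitOutPMF W f pb j) n ε)
            then 1 else 0) * ((2:ℝ) ^ (-(n:ℝ)) * CsR)) :=
          Finset.sum_congr rfl fun b' _ => by rw [hA1 b']
      _ ≤ ∑ b' : Fin n → Fin m → Bool,
          (if (∀ j : Fin m,
              ((fun i => b' i j), y) ∈ jointTypicalSet (bitOutPMF W f pb j) n ε)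
            then 1 else 0) * ((2:ℝ) ^ (-(n:ℝ)) * CsR) := by
          refine Finset.sum_le_sum fun b' _ => ?_
          have hX : (0:ℝ) ≤ (if (∀ j : Fin m,
              ((fun i => b' i j), y) ∈ jointTypicalSet (bitOutPMF W f pb j) n ε)
            then 1 else 0) * ((2:ℝ) ^ (-(n:ℝ)) * CsR) := by
            refine mul_nonneg (by split <;> norm_num)
              (mul_nonneg (Real.rpow_nonneg (by norm_num) _) hCsR0)
          split
          · rw [one_mul]
          · rw [zero_mul]; exact hX
      _ = ((Finset.univ.filter
          (fun b' : Fin n → Fin m → Bool => ∀ j : Fin m,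
            ((fun i => b' i j), y) ∈ jointTypicalSet (bitOutPMF W f pb j) n ε)).card : ℝ)
          * ((2:ℝ) ^ (-(n:ℝ)) * CsR) := by
          rw [← Finset.sum_mul, Finset.sum_boole]
      _ ≤ (2:ℝ) ^ ((n:ℝ) * ((∑ j : Fin m,
            (ent (bitOutPMF W f pb j) - ent (outPMF W f pb))) + 2*(m:ℝ)*ε))
          * ((2:ℝ) ^ (-(n:ℝ)) *
            (2:ℝ) ^ ((n:ℝ) * (ent (signOutPMF W f pb) - ent (outPMF W f pb) + 2*ε))) := by
          refine mul_le_mul hCb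
            (mul_le_mul_of_nonneg_left hCs (Real.rpow_nonneg (by norm_num) _))
            (mul_nonneg (Real.rpow_nonneg (by norm_num) _) hCsR0)
            (Real.rpow_nonneg (by norm_num) _)
      _ = K := by
          rw [← Real.rpow_add two_pos, ← Real.rpow_add two_pos, hKdef, hEdef]
          congr 1
          ring
  -- per-codeword bound
  have hT : ∀ b : Fin n → Fin m → Bool,
      (∑ s : Fin n → Sign, (2 : ℝ) ^ (-(n : ℝ)) *
        ∑ y : Fin n → Y, (∏ i, W (s i, f (b i)) (y i)) *
          ∑ b' : Fin n → Fin m → Bool,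
            (if b' ∈ BtypicalSet (pairBSY W f pb) n ε ∧ b' ≠ b then (1:ℝ) else 0) *
            ∑ s' : Fin n → Sign, (2 : ℝ) ^ (-(n : ℝ)) *
              (if ((s', y) ∈ jointTypicalSet (signOutPMF W f pb) n ε ∧
                  ∀ j : Fin m,
                    ((fun i => b' i j), y) ∈ jointTypicalSet (bitOutPMF W f pb j) n ε)
                then 1 else 0)) ≤ K := by
    intro b
    have hy : ∀ s : Fin n → Sign,
        (∑ y : Fin n → Y, (∏ i, W (s i, f (b i)) (y i)) *
          ∑ b' : Fin n → Fin m → Bool,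
            (if b' ∈ BtypicalSet (pairBSY W f pb) n ε ∧ b' ≠ b then (1:ℝ) else 0) *
            ∑ s' : Fin n → Sign, (2 : ℝ) ^ (-(n : ℝ)) *
              (if ((s', y) ∈ jointTypicalSet (signOutPMF W f pb) n ε ∧
                  ∀ j : Fin m,
                    ((fun i => b' i j), y) ∈ jointTypicalSet (bitOutPMF W f pb j) n ε)
                then 1 else 0)) ≤ K := by
      intro s
      calc _ ≤ ∑ y : Fin n → Y, (∏ i, W (s i, f (b i)) (y i)) * K :=
            Finset.sum_le_sum fun y _ => mul_le_mul_of_nonneg_left (hInner b y)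
              (Finset.prod_nonneg fun i _ => hW0 _ _)
        _ = (∑ y : Fin n → Y, ∏ i, W (s i, f (b i)) (y i)) * K := by
            rw [Finset.sum_mul]
        _ = K := by rw [hWn b s, one_mul]
    have hcard : ((Fintype.card (Fin n → Sign) : ℕ) : ℝ) = (2:ℝ) ^ ((n:ℝ)) := by
      rw [Fintype.card_fun]
      have h1 : Fintype.card Sign = 2 := rfl
      rw [h1, Fintype.card_fin]
      push_cast
      rw [Real.rpow_natCast]
    calc _ ≤ ∑ _s : Fin n → Sign, (2:ℝ) ^ (-(n:ℝ)) * K :=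
          Finset.sum_le_sum fun s _ => mul_le_mul_of_nonneg_left (hy s)
            (Real.rpow_nonneg (by norm_num) _)
      _ = ((Fintype.card (Fin n → Sign) : ℕ) : ℝ) * ((2:ℝ) ^ (-(n:ℝ)) * K) := by
          rw [Finset.sum_const, nsmul_eq_mul, Finset.card_univ]
      _ = K := by
          rw [hcard, ← mul_assoc, ← Real.rpow_add two_pos]
          simp
  -- sum over the codebook
  have hBset : (Finset.univ.filter
      (fun b : Fin n → Fin m → Bool => b ∈ BtypicalSet (pairBSY W f pb) n ε))
      = (BtypicalSet (pairBSY W f pb) n ε).toFinset := by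
    ext x
    simp [Set.mem_toFinset]
  have hsum1 : (∑ b : Fin n → Fin m → Bool,
      (if b ∈ BtypicalSet (pairBSY W f pb) n ε then
        (1 / ((BtypicalSet (pairBSY W f pb) n ε).ncard : ℝ)) else 0)) ≤ 1 := by
    rw [Finset.sum_ite, Finset.sum_const, Finset.sum_const_zero, add_zero, nsmul_eq_mul]
    rw [hBset, Set.ncard_eq_toFinset_card']
    rcases eq_or_ne ((((BtypicalSet (pairBSY W f pb) n ε).toFinset.card) : ℝ)) 0 with h | h
    · rw [h]; norm_num
    · rw [mul_one_div, div_self h]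
  have hfinal : K ≤ (2 : ℝ) ^ ((n : ℝ) *
      (ent pb - ent (bitsSignPMF pb) +
        (∑ j : Fin m, (ent (bitOutPMF W f pb j) - ent (outPMF W f pb))) +
        (ent (signOutPMF W f pb) - ent (outPMF W f pb)) +
        (12 + 2 * (m : ℝ)) * ε)) := by
    rw [hKdef]
    apply Real.rpow_le_rpow_of_exponent_le one_le_two
    refine mul_le_mul_of_nonneg_left ?_ (Nat.cast_nonneg n)
    rw [hEdef, ent_bitsSignPMF pb hpb1]
    nlinarith [hε.le]
  calc _ ≤ ∑ b : Fin n → Fin m → Bool,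
        (if b ∈ BtypicalSet (pairBSY W f pb) n ε then
          (1 / ((BtypicalSet (pairBSY W f pb) n ε).ncard : ℝ)) else 0) * K := by
        refine Finset.sum_le_sum fun b _ => mul_le_mul_of_nonneg_left (hT b) ?_
        split
        · positivity
        · exact le_refl (0:ℝ)
    _ = (∑ b : Fin n → Fin m → Bool,
        (if b ∈ BtypicalSet (pairBSY W f pb) n ε then
          (1 / ((BtypicalSet (pairBSY W f pb) n ε).ncard : ℝ)) else 0)) * K := by
        rw [Finset.sum_mul]
    _ ≤ 1 * K := mul_le_mul_of_nonneg_right hsum1 hK0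
    _ = K := one_mul K
    _ ≤ _ := hfinal
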